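/- Let $X$ be a sequentially complete separated uniform space with graph $G$, and $T : X \to X$ an orbitally $G$-continuous Banach $G$-contraction. If $x \in X_T$ (i.e., $(x,Tx) \in E(G)$), then there exists a unique fixed point $x^*$ of $T$ such that $T^n y \to x^*$ for all $y \in [x]_{\widetilde{G}}$. In particular, if $X_T \ne \emptyset$ and $G$ is weakly connected, then $T$ is a Picard operator. -/

import Mathlib

open Filter Topology Set

/-- A pseudometric on `X`. -/
def IsPseudoMetric {X : Type*} (d : X → X → ℝ) : Prop :=
  (∀ x, d x x = 0) ∧ (∀ x y, d x y = d y x) ∧ (∀ x y z, d x z ≤ d x y + d y z)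

/-- The set `V(ρ, r) = {(x,y) : ρ(x,y) < r}`. -/
def VEnt {X : Type*} (d : X → X → ℝ) (r : ℝ) : Set (X × X) := {p | d p.1 p.2 < r}

/-- The scaled basic entourage `α V = ⋂ i, V(ρ i, α * r i)`. -/
def scaledEnt {X : Type*} {m : ℕ} (ρ : Fin m → X → X → ℝ) (r : Fin m → ℝ) (α : ℝ) :
    Set (X × X) := ⋂ i, VEnt (ρ i) (α * r i)

/-- The uniformity of `X` is generated by the family `F` of pseudometrics:
each `V(F i, r)` is an entourage, and the basic entourages form a base. -/
def GeneratesUniformity {X ι : Type*} [UniformSpace X] (F : ι → X → X → ℝ) : Prop :=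
  (∀ i, IsPseudoMetric (F i)) ∧
  (∀ i (r : ℝ), 0 < r → VEnt (F i) r ∈ uniformity X) ∧
  (∀ U ∈ uniformity X, ∃ (m : ℕ) (f : Fin m → ι) (r : Fin m → ℝ),
    (∀ i, 0 < r i) ∧ scaledEnt (fun i => F (f i)) r 1 ⊆ U)

/-- `T` is a Banach `G`-contraction (with edge set `E`) with contractive constant `α`,
with respect to the family `F` of pseudometrics. -/
def BanachGContraction {X ι : Type*} (F : ι → X → X → ℝ) (E : Set (X × X))
    (T : X → X) (α : ℝ) : Prop :=
  (∀ x y : X, (x, y) ∈ E → (T x, T y) ∈ E) ∧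
  (∀ (m : ℕ) (f : Fin m → ι) (r : Fin m → ℝ), (∀ i, 0 < r i) →
    ∀ x y : X, (x, y) ∈ scaledEnt (fun i => F (f i)) r 1 ∩ E →
      (T x, T y) ∈ scaledEnt (fun i => F (f i)) r α)

/-- The relation of the symmetrized graph `G̃`. -/
def symRel {X : Type*} (E : Set (X × X)) (a b : X) : Prop := (a, b) ∈ E ∨ (b, a) ∈ E

/-- The edge set of the symmetrized graph `G̃`. -/
def symEdges {X : Type*} (E : Set (X × X)) : Set (X × X) :=
  E ∪ {p | (p.2, p.1) ∈ E}

/-- The component `[x]_{G̃}` of `x`: all points joined to `x` by a path in `G̃`. -/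
def component {X : Type*} (E : Set (X × X)) (x : X) : Set X :=
  {y | Relation.ReflTransGen (symRel E) x y}

lemma pm_nonneg {X : Type*} {d : X → X → ℝ} (h : IsPseudoMetric d) (x y : X) : 0 ≤ d x y := by
  have h1 := h.2.2 x y x
  rw [h.1, h.2.1 y x] at h1
  linarith

lemma contr {X ι : Type*} {F : ι → X → X → ℝ} {E : Set (X × X)} {T : X → X} {α : ℝ}
    (hpm : ∀ i, IsPseudoMetric (F i)) (hα0 : 0 < α)
    (hT : BanachGContraction F E T α) {x y : X} (hxy : (x, y) ∈ E) (i : ι) :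
    F i (T x) (T y) ≤ α * F i x y := by
  by_contra hcon
  push_neg at hcon
  set ε := (F i (T x) (T y) - α * F i x y) / α with hε
  have hεpos : 0 < ε := by
    apply div_pos _ hα0; linarith
  have hr : 0 < F i x y + ε := by
    have := pm_nonneg (hpm i) x y; linarith
  have hmem : (x, y) ∈ scaledEnt (fun _ : Fin 1 => F i) (fun _ => F i x y + ε) 1 := by
    simp only [scaledEnt, VEnt, Set.mem_iInter, Set.mem_setOf_eq, one_mul]
    intro _; linarith
  have h2 := hT.2 1 (fun _ => i) (fun _ => F i x y + ε) (fun _ => hr) x y ⟨hmem, hxy⟩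
  simp only [scaledEnt, VEnt, Set.mem_iInter, Set.mem_setOf_eq] at h2
  have h3 := h2 0
  have : α * ε = F i (T x) (T y) - α * F i x y := by
    rw [hε]; field_simp
  nlinarith

lemma iter_bound {X ι : Type*} {F : ι → X → X → ℝ} {E : Set (X × X)} {T : X → X} {α : ℝ}
    (hpm : ∀ i, IsPseudoMetric (F i)) (hα0 : 0 < α)
    (hT : BanachGContraction F E T α) {x y : X} (hxy : (x, y) ∈ E) (n : ℕ) :
    (T^[n] x, T^[n] y) ∈ E ∧ ∀ i, F i (T^[n] x) (T^[n] y) ≤ α ^ n * F i x y := by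
  induction n with
  | zero =>
    refine ⟨by simpa using hxy, fun i => ?_⟩
    simpa using le_refl (F i x y)
  | succ n ih =>
    rw [Function.iterate_succ_apply', Function.iterate_succ_apply']
    refine ⟨hT.1 _ _ ih.1, fun i => ?_⟩
    have h1 := contr hpm hα0 hT ih.1 i
    have h2 := ih.2 i
    calc F i (T (T^[n] x)) (T (T^[n] y)) ≤ α * F i (T^[n] x) (T^[n] y) := h1
    _ ≤ α * (α ^ n * F i x y) := by nlinarith
    _ = α ^ (n + 1) * F i x y := by ring

lemma chain_bound {X ι : Type*} {F : ι → X → X → ℝ} {E : Set (X × X)} {T : X → X} {α : ℝ}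
    (hpm : ∀ i, IsPseudoMetric (F i)) (hα0 : 0 < α) (hα1 : α < 1)
    (hT : BanachGContraction F E T α) {x : X} (hx : (x, T x) ∈ E) (i : ι) :
    ∀ p k, F i (T^[k] x) (T^[k + p] x) ≤ α ^ k * (F i x (T x) / (1 - α)) := by
  have hd0 : 0 ≤ F i x (T x) := pm_nonneg (hpm i) _ _
  have h1α : 0 < 1 - α := by linarith
  intro p
  induction p with
  | zero =>
    intro k
    simp only [Nat.add_zero, (hpm i).1]
    positivity
  | succ p ih =>
    intro k
    have htri := (hpm i).2.2 (T^[k] x) (T^[k + 1] x) (T^[k + (p + 1)] x)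
    have h2 := (iter_bound hpm hα0 hT hx k).2 i
    rw [← Function.iterate_succ_apply] at h2
    have h3 := ih (k + 1)
    have hkp : k + 1 + p = k + (p + 1) := by ring
    rw [hkp] at h3
    have key : α ^ k * F i x (T x) + α ^ (k + 1) * (F i x (T x) / (1 - α))
        = α ^ k * (F i x (T x) / (1 - α)) := by
      rw [pow_succ]; field_simp; ring
    calc F i (T^[k] x) (T^[k + (p + 1)] x)
        ≤ F i (T^[k] x) (T^[k + 1] x) + F i (T^[k + 1] x) (T^[k + (p + 1)] x) := htri
      _ ≤ α ^ k * F i x (T x) + α ^ (k + 1) * (F i x (T x) / (1 - α)) := by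
          exact add_le_add h2 h3
      _ = α ^ k * (F i x (T x) / (1 - α)) := key

lemma eventually_small {α : ℝ} (hα0 : 0 < α) (hα1 : α < 1) (C r : ℝ) (hr : 0 < r) :
    ∀ᶠ n in atTop, α ^ n * C < r := by
  have h := tendsto_pow_atTop_nhds_zero_of_lt_one hα0.le hα1
  have h2 := h.mul_const C
  rw [zero_mul] at h2
  exact h2.eventually (gt_mem_nhds hr)

lemma orbit_cauchy {X ι : Type*} [UniformSpace X] {F : ι → X → X → ℝ}
    {E : Set (X × X)} {T : X → X} {α : ℝ}
    (hgen : GeneratesUniformity F) (hα0 : 0 < α) (hα1 : α < 1)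
    (hT : BanachGContraction F E T α) {x : X} (hx : (x, T x) ∈ E) :
    CauchySeq (fun n => T^[n] x) := by
  have hpm := hgen.1
  rw [cauchySeq_iff]
  intro V hV
  obtain ⟨m, f, r, hrpos, hsub⟩ := hgen.2.2 V hV
  have key : ∀ᶠ N in atTop, ∀ i : Fin m, α ^ N * (F (f i) x (T x) / (1 - α)) < r i := by
    rw [eventually_all]
    exact fun i => eventually_small hα0 hα1 _ _ (hrpos i)
  obtain ⟨N, hN⟩ := key.exists
  refine ⟨N, fun k hk l hl => ?_⟩
  apply hsub
  simp only [scaledEnt, VEnt, Set.mem_iInter, Set.mem_setOf_eq, one_mul]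
  intro i
  have hbound : ∀ a b : ℕ, N ≤ a → a ≤ b → F (f i) (T^[a] x) (T^[b] x) < r i := by
    intro a b ha hab
    obtain ⟨p, rfl⟩ := Nat.exists_eq_add_of_le hab
    have hdiv : 0 ≤ F (f i) x (T x) / (1 - α) := by
      have := pm_nonneg (hpm (f i)) x (T x)
      have h1α : 0 < 1 - α := by linarith
      positivity
    calc F (f i) (T^[a] x) (T^[a + p] x)
        ≤ α ^ a * (F (f i) x (T x) / (1 - α)) := chain_bound hpm hα0 hα1 hT hx (f i) p a
      _ ≤ α ^ N * (F (f i) x (T x) / (1 - α)) := by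
          apply mul_le_mul_of_nonneg_right _ hdiv
          exact pow_le_pow_of_le_one hα0.le hα1.le ha
      _ < r i := hN i
  rcases le_total k l with h | h
  · exact hbound k l hk h
  · rw [(hpm (f i)).2.1]; exact hbound l k hl h

lemma tendsto_of_close {X ι : Type*} [UniformSpace X] {F : ι → X → X → ℝ}
    (hgen : GeneratesUniformity F) {u v : ℕ → X} {z : X}
    (hu : Tendsto u atTop (nhds z))
    (hclose : ∀ i (ε : ℝ), 0 < ε → ∀ᶠ n in atTop, F i (u n) (v n) < ε) :
    Tendsto v atTop (nhds z) := by
  rw [Uniform.tendsto_nhds_right] at hu ⊢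
  intro V hV
  obtain ⟨m, f, r, hrpos, hsub⟩ := hgen.2.2 V hV
  have hev : ∀ᶠ n in atTop, ∀ i : Fin m, F (f i) z (v n) < r i := by
    rw [eventually_all]
    intro i
    have h1 : ∀ᶠ n in atTop, F (f i) z (u n) < r i / 2 :=
      hu (hgen.2.1 (f i) (r i / 2) (by have := hrpos i; positivity))
    filter_upwards [h1, hclose (f i) (r i / 2) (by have := hrpos i; positivity)] with n ha hb
    calc F (f i) z (v n) ≤ F (f i) z (u n) + F (f i) (u n) (v n) := (hgen.1 (f i)).2.2 _ _ _
      _ < r i := by linarith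
  exact hev.mono fun n hn => hsub (by
    simp only [scaledEnt, VEnt, Set.mem_iInter, Set.mem_setOf_eq, one_mul]
    exact hn)

lemma uniq_limit {X : Type*} [UniformSpace X]
    (hsep : ∀ x y : X, (∀ U ∈ uniformity X, (x, y) ∈ U) → x = y)
    {u : ℕ → X} {a b : X} (ha : Tendsto u atTop (nhds a)) (hb : Tendsto u atTop (nhds b)) :
    a = b := by
  apply hsep
  intro U hU
  obtain ⟨W, hW, hWU⟩ := comp_mem_uniformity_sets hU
  have h1 : ∀ᶠ n in atTop, (a, u n) ∈ W := Uniform.tendsto_nhds_right.mp ha hW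
  have h2 : ∀ᶠ n in atTop, (u n, b) ∈ W := Uniform.tendsto_nhds_left.mp hb hW
  obtain ⟨n, hn1, hn2⟩ := (h1.and h2).exists
  exact hWU (SetRel.prodMk_mem_comp hn1 hn2)

lemma comp_bound {X ι : Type*} {F : ι → X → X → ℝ} {E : Set (X × X)} {T : X → X} {α : ℝ}
    (hpm : ∀ i, IsPseudoMetric (F i)) (hα0 : 0 < α)
    (hT : BanachGContraction F E T α) {x y : X}
    (hy : Relation.ReflTransGen (symRel E) x y) (i : ι) :
    ∃ C, 0 ≤ C ∧ ∀ n, F i (T^[n] x) (T^[n] y) ≤ α ^ n * C := by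
  induction hy with
  | refl => exact ⟨0, le_refl 0, fun n => by simp [(hpm i).1]⟩
  | tail _ hbc ih =>
    obtain ⟨C, hC0, hC⟩ := ih
    rename_i b c _
    have hstep : ∃ D, 0 ≤ D ∧ ∀ n, F i (T^[n] b) (T^[n] c) ≤ α ^ n * D := by
      rcases hbc with h | h
      · exact ⟨F i b c, pm_nonneg (hpm i) _ _, fun n => (iter_bound hpm hα0 hT h n).2 i⟩
      · refine ⟨F i c b, pm_nonneg (hpm i) _ _, fun n => ?_⟩
        rw [(hpm i).2.1]
        exact (iter_bound hpm hα0 hT h n).2 i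
    obtain ⟨D, hD0, hD⟩ := hstep
    refine ⟨C + D, by linarith, fun n => ?_⟩
    calc F i (T^[n] x) (T^[n] c)
        ≤ F i (T^[n] x) (T^[n] b) + F i (T^[n] b) (T^[n] c) := (hpm i).2.2 _ _ _
      _ ≤ α ^ n * C + α ^ n * D := add_le_add (hC n) (hD n)
      _ = α ^ n * (C + D) := by ring


theorem stmt17 {X ι : Type*} [UniformSpace X] (F : ι → X → X → ℝ)
    (hgen : GeneratesUniformity F)
    (hsep : ∀ x y : X, (∀ U ∈ uniformity X, (x, y) ∈ U) → x = y)
    (hcomp : ∀ u : ℕ → X, CauchySeq u → ∃ z : X, Tendsto u atTop (nhds z))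
    (E : Set (X × X)) (hloop : ∀ x : X, (x, x) ∈ E)
    (T : X → X) (α : ℝ) (hα0 : 0 < α) (hα1 : α < 1)
    (hT : BanachGContraction F E T α)
    (hOGC : ∀ (x y : X) (p : ℕ → ℕ), (∀ n, 0 < p n) →
      (∀ n : ℕ, (T^[p n] x, T^[p (n + 1)] x) ∈ E) →
      Tendsto (fun n : ℕ => T^[p n] x) atTop (nhds y) →
      Tendsto (fun n : ℕ => T^[p n + 1] x) atTop (nhds (T y))) :
    (∀ x : X, (x, T x) ∈ E →
      ∃! xs : X, T xs = xs ∧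
        ∀ y ∈ component E x, Tendsto (fun n : ℕ => T^[n] y) atTop (nhds xs)) ∧
    (((∃ x : X, (x, T x) ∈ E) ∧ (∀ a b : X, Relation.ReflTransGen (symRel E) a b)) →
      ∃ xs : X, T xs = xs ∧ (∀ y : X, T y = y → y = xs) ∧
        ∀ x : X, Tendsto (fun n : ℕ => T^[n] x) atTop (nhds xs)) := by
  have hpm := hgen.1
  have hmain : ∀ x : X, (x, T x) ∈ E →
      ∃! xs : X, T xs = xs ∧
        ∀ y ∈ component E x, Tendsto (fun n : ℕ => T^[n] y) atTop (nhds xs) := by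
    intro x hx
    obtain ⟨z, hz⟩ := hcomp _ (orbit_cauchy hgen hα0 hα1 hT hx)
    have hedge : ∀ n : ℕ, (T^[n] x, T^[n + 1] x) ∈ E := by
      intro n
      have := (iter_bound hpm hα0 hT hx n).1
      rwa [← Function.iterate_succ_apply] at this
    have hfix : T z = z := by
      have h1 : Tendsto (fun n : ℕ => T^[n + 1] x) atTop (nhds z) :=
        hz.comp (tendsto_add_atTop_nat 1)
      have h2 := hOGC x z (fun n => n + 1) (fun n => n.succ_pos) (fun n => hedge (n + 1)) h1
      have h3 : Tendsto (fun n : ℕ => T^[n + 1 + 1] x) atTop (nhds z) :=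
        hz.comp (tendsto_add_atTop_nat 2)
      exact uniq_limit hsep h2 h3
    have hconv : ∀ y ∈ component E x, Tendsto (fun n : ℕ => T^[n] y) atTop (nhds z) := by
      intro y hy
      apply tendsto_of_close hgen hz
      intro i ε hε
      obtain ⟨C, hC0, hC⟩ := comp_bound hpm hα0 hT hy i
      filter_upwards [eventually_small hα0 hα1 C ε hε] with n hn
      exact lt_of_le_of_lt (hC n) hn
    refine ⟨z, ⟨hfix, hconv⟩, ?_⟩
    rintro x' ⟨hx'fix, hx'conv⟩
    exact uniq_limit hsep (hx'conv x Relation.ReflTransGen.refl)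
      (hconv x Relation.ReflTransGen.refl)
  refine ⟨hmain, ?_⟩
  rintro ⟨⟨x, hx⟩, hconn⟩
  obtain ⟨xs, ⟨hfix, hconv⟩, -⟩ := hmain x hx
  refine ⟨xs, hfix, ?_, fun y => hconv y (hconn x y)⟩
  intro y hy
  have h1 : Tendsto (fun n : ℕ => T^[n] y) atTop (nhds y) := by
    have heq : (fun n : ℕ => T^[n] y) = fun _ => y :=
      funext fun n => Function.iterate_fixed hy n
    rw [heq]; exact tendsto_const_nhds
  exact uniq_limit hsep h1 (hconv y (hconn x y))
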